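/- Let (G, B₁, B₂) be a Rota-Baxter system of groups. Then the images B₁(G) and B₂(G) are subgroups of G. -/

import Mathlib

theorem stmt_11 {G : Type*} [Group G] (B₁ B₂ : G → G)
    (h1 : ∀ a b : G, B₁ a * B₁ b = B₁ (B₁ a * b * B₂ a))
    (h2 : ∀ a b : G, B₂ b * B₂ a = B₂ (B₁ a * b * B₂ a)) :
    (∃ H : Subgroup G, (H : Set G) = Set.range B₁) ∧
    (∃ K : Subgroup G, (K : Set G) = Set.range B₂) := by
  -- key: for all a g, B₁ g = B₁ a * B₁ ((B₁ a)⁻¹ * g * (B₂ a)⁻¹)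
  have key1 : ∀ a g : G, ∃ b, B₁ g = B₁ a * B₁ b := by
    intro a g
    refine ⟨(B₁ a)⁻¹ * g * (B₂ a)⁻¹, ?_⟩
    have := h1 a ((B₁ a)⁻¹ * g * (B₂ a)⁻¹)
    rw [this]
    group
  have key2 : ∀ a g : G, ∃ b, B₂ g = B₂ b * B₂ a := by
    intro a g
    refine ⟨(B₁ a)⁻¹ * g * (B₂ a)⁻¹, ?_⟩
    have := h2 a ((B₁ a)⁻¹ * g * (B₂ a)⁻¹)
    rw [this]
    group
  have one1 : (1 : G) ∈ Set.range B₁ := by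
    obtain ⟨b, hb⟩ := key1 1 1
    exact ⟨b, left_eq_mul.mp hb⟩
  have one2 : (1 : G) ∈ Set.range B₂ := by
    obtain ⟨b, hb⟩ := key2 1 1
    exact ⟨b, right_eq_mul.mp hb⟩
  constructor
  · obtain ⟨c, hc⟩ := id one1
    refine ⟨{
      carrier := Set.range B₁
      mul_mem' := by
        rintro x y ⟨a, rfl⟩ ⟨b, rfl⟩
        exact ⟨B₁ a * b * B₂ a, (h1 a b).symm⟩
      one_mem' := one1
      inv_mem' := by
        rintro x ⟨a, rfl⟩
        obtain ⟨b, hb⟩ := key1 a c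
        rw [hc] at hb
        exact ⟨b, eq_inv_of_mul_eq_one_right hb.symm⟩ }, rfl⟩
  · obtain ⟨c, hc⟩ := id one2
    refine ⟨{
      carrier := Set.range B₂
      mul_mem' := by
        rintro x y ⟨a, rfl⟩ ⟨b, rfl⟩
        exact ⟨B₁ b * a * B₂ b, (h2 b a).symm⟩
      one_mem' := one2
      inv_mem' := by
        rintro x ⟨a, rfl⟩
        obtain ⟨b, hb⟩ := key2 a c
        rw [hc] at hb
        exact ⟨b, eq_inv_of_mul_eq_one_left hb.symm⟩ }, rfl⟩
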